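/- Let P be a Λ×I matrix with entries in G⁰ and let i,i',j,j' ∈ I and λ,λ',μ,μ' ∈ Λ with p_{μj'} = 0 and p_{μ'j} = 0. In the simplified graph G(I,Λ,P): (1) If there is a path from (i,λ') to (j,μ') and a path from (i',λ) to (j',μ), then, letting n = d((i,λ'),(j,μ')) and m = d((i',λ),(j',μ)), the distance d((i,λ),(j,μ)) is at most max{n,m} if max{n,m} is even, and at most 1 + max{n,m} if max{n,m} is odd. (2) If there is a path from (i,λ') to (j',μ) and a path from (i',λ) to (j,μ'), then, letting n = d((i,λ'),(j',μ)) and m = d((i',λ),(j,μ')), the distance d((i,λ),(j,μ)) is at most 1 + max{n,m} if max{n,m} is even, and at most max{n,m} if max{n,m} is odd. -/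

import Mathlib

variable {G : Type*} [Group G] {I Λ : Type*}

/-- The simplified graph `G(I,Λ,P)` on `I×Λ`: distinct vertices `(i,λ)` and `(j,μ)` are
adjacent iff `p_{λj} = 0` and `p_{μi} = 0`. Entries of `P` lie in `G⁰`, encoded as
`Option G` with `none` as the zero. -/
def simpGraph {G : Type*} [Group G] {I Λ : Type*} (P : Λ → I → Option G) :
    SimpleGraph (I × Λ) where
  Adj a b := a ≠ b ∧ P a.2 b.1 = none ∧ P b.2 a.1 = none
  symm := ⟨fun _ _ h => ⟨h.1.symm, h.2.2, h.2.1⟩⟩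
  loopless := ⟨fun _ h => h.1 rfl⟩

/-- The bipartite incidence graph on `I ⊕ Λ`: `i ~ λ` iff `P λ i = 0`. -/
def bipGraph {G : Type*} [Group G] {I Λ : Type*} (P : Λ → I → Option G) :
    SimpleGraph (I ⊕ Λ) where
  Adj a b := match a, b with
    | .inl i, .inr l => P l i = none
    | .inr l, .inl i => P l i = none
    | _, _ => False
  symm := ⟨by rintro (i|l) (j|k) h <;> exact h⟩
  loopless := ⟨by rintro (i|l) h <;> exact h⟩

def endA {I Λ : Type*} (y : I × Λ) (n : ℕ) : I ⊕ Λ := if Even n then .inl y.1 else .inr y.2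
def endB {I Λ : Type*} (y : I × Λ) (n : ℕ) : I ⊕ Λ := if Even n then .inr y.2 else .inl y.1

lemma endA_succ {I Λ : Type*} (y : I × Λ) (n : ℕ) : endA y (n+1) = endB y n := by
  by_cases h : Even n <;> simp [endA, endB, Nat.even_add_one, h]

lemma endB_succ {I Λ : Type*} (y : I × Λ) (n : ℕ) : endB y (n+1) = endA y n := by
  by_cases h : Even n <;> simp [endA, endB, Nat.even_add_one, h]

lemma extract (P : Λ → I → Option G) {x y : I × Λ} (p : (simpGraph P).Walk x y) :
    (∃ q : (bipGraph P).Walk (.inl x.1) (endA y p.length), q.length = p.length) ∧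
    (∃ q : (bipGraph P).Walk (.inr x.2) (endB y p.length), q.length = p.length) := by
  induction p with
  | nil =>
      exact ⟨⟨SimpleGraph.Walk.nil.copy rfl (by simp [endA]), by rw [SimpleGraph.Walk.length_copy]; rfl⟩,
             ⟨SimpleGraph.Walk.nil.copy rfl (by simp [endB]), by rw [SimpleGraph.Walk.length_copy]; rfl⟩⟩
  | @cons u v w h p ih =>
      obtain ⟨⟨qX, hqX⟩, ⟨qY, hqY⟩⟩ := ih
      exact ⟨⟨(SimpleGraph.Walk.cons (show (bipGraph P).Adj (.inl u.1) (.inr v.2) from (show u ≠ v ∧ P u.2 v.1 = none ∧ P v.2 u.1 = none from h).2.2)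
          qY).copy rfl (endA_succ w p.length).symm, by simp [hqY]⟩,
        ⟨(SimpleGraph.Walk.cons (show (bipGraph P).Adj (.inr u.2) (.inl v.1) from (show u ≠ v ∧ P u.2 v.1 = none ∧ P v.2 u.1 = none from h).2.1)
          qX).copy rfl (endB_succ w p.length).symm, by simp [hqX]⟩⟩

lemma combine (P : Λ → I → Option G) : ∀ (N : ℕ) (i : I) (l : Λ) (y : I × Λ)
    (qX : (bipGraph P).Walk (.inl i) (endA y N)) (qY : (bipGraph P).Walk (.inr l) (endB y N)),
    qX.length = N → qY.length = N →
    ∃ w : (simpGraph P).Walk (i, l) y, w.length ≤ N := by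
  intro N
  induction N with
  | zero =>
      intro i l y qX qY hX hY
      have h1 : (Sum.inl i : I ⊕ Λ) = endA y 0 := qX.eq_of_length_eq_zero hX
      have h2 : (Sum.inr l : I ⊕ Λ) = endB y 0 := qY.eq_of_length_eq_zero hY
      simp only [endA, endB, if_pos (Even.zero)] at h1 h2
      have : (i, l) = y := by
        cases y; simp_all
      exact ⟨SimpleGraph.Walk.nil.copy rfl this, by simp⟩
  | succ N ih =>
      intro i l y qX qY hX hY
      have hEA := endA_succ y N
      have hEB := endB_succ y N
      generalize hA : endA y (N + 1) = EA at qX hEA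
      generalize hB : endB y (N + 1) = EB at qY hEB
      cases qX with
      | nil => simp at hX
      | @cons _ s _ e qX' =>
        cases qY with
        | nil => simp at hY
        | @cons _ s' _ e' qY' =>
          cases s with
          | inl i2 => exact absurd e (by simp [bipGraph])
          | inr l1 =>
            cases s' with
            | inr l2 => exact absurd e' (by simp [bipGraph])
            | inl i1 =>
              -- e : P l1 i = none, e' : P l i1 = none
              have hX' : qX'.length = N := by simpa using hX
              have hY' : qY'.length = N := by simpa using hY
              obtain ⟨w', hw'⟩ := ih i1 l1 y (qY'.copy rfl hEB)
                (qX'.copy rfl hEA) (by simpa using hY') (by simpa using hX')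
              by_cases hv : (i, l) = (i1, l1)
              · exact ⟨w'.copy hv.symm rfl, by simp; omega⟩
              · exact ⟨SimpleGraph.Walk.cons (v := (i1, l1)) (show (simpGraph P).Adj (i, l) (i1, l1) from ⟨hv, (show P l i1 = none from e'), (show P l1 i = none from e)⟩) w', by simp [hw']⟩

lemma ext_even (P : Λ → I → Option G) {x y z : I ⊕ Λ} (h : (bipGraph P).Adj y z)
    (q : (bipGraph P).Walk x y) (k : ℕ) :
    ∃ q' : (bipGraph P).Walk x y, q'.length = q.length + 2 * k := by
  induction k with
  | zero => exact ⟨q, by simp⟩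
  | succ k ih =>
      obtain ⟨q', hq'⟩ := ih
      exact ⟨(q'.concat h).concat h.symm, by simp [hq']; omega⟩

lemma ext_odd (P : Λ → I → Option G) {x y z : I ⊕ Λ} (h : (bipGraph P).Adj y z)
    (q : (bipGraph P).Walk x y) (k : ℕ) :
    ∃ q' : (bipGraph P).Walk x z, q'.length = q.length + 2 * k + 1 := by
  obtain ⟨q', hq'⟩ := ext_even P h q k
  exact ⟨q'.concat h, by simp [hq']⟩

lemma reachTarget (P : Λ → I → Option G) {y z : I ⊕ Λ} (h : (bipGraph P).Adj y z)
    {x : I ⊕ Λ} {n N : ℕ}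
    (hq : ∃ q : (bipGraph P).Walk x (if Even n then y else z), q.length = n)
    (hle : n ≤ N) :
    ∃ q' : (bipGraph P).Walk x (if Even N then y else z), q'.length = N := by
  by_cases hn : Even n
  · rw [if_pos hn] at hq
    obtain ⟨q, hqn⟩ := hq
    obtain ⟨a, ha⟩ := hn
    by_cases hN : Even N
    · rw [if_pos hN]
      obtain ⟨b, hb⟩ := hN
      obtain ⟨q', hq'⟩ := ext_even P h q (b - a)
      exact ⟨q', by omega⟩
    · rw [if_neg hN]
      obtain ⟨b, hb⟩ := Nat.not_even_iff_odd.mp hN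
      obtain ⟨q', hq'⟩ := ext_odd P h q (b - a)
      exact ⟨q', by omega⟩
  · rw [if_neg hn] at hq
    obtain ⟨q, hqn⟩ := hq
    obtain ⟨a, ha⟩ := Nat.not_even_iff_odd.mp hn
    by_cases hN : Even N
    · rw [if_pos hN]
      obtain ⟨b, hb⟩ := hN
      obtain ⟨q', hq'⟩ := ext_odd P h.symm q (b - a - 1)
      exact ⟨q', by omega⟩
    · rw [if_neg hN]
      obtain ⟨b, hb⟩ := Nat.not_even_iff_odd.mp hN
      obtain ⟨q', hq'⟩ := ext_even P h.symm q (b - a)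
      exact ⟨q', by omega⟩

/-- Distance bounds in `G(I,Λ,P)` given `p_{μj'} = 0` and `p_{μ'j} = 0`:
(1) if `(i,λ')` reaches `(j,μ')` and `(i',λ)` reaches `(j',μ)`, then `(i,λ)` reaches `(j,μ)`
and `d((i,λ),(j,μ)) ≤ max{n,m}` if `max{n,m}` is even, and `≤ 1 + max{n,m}` if odd, where
`n = d((i,λ'),(j,μ'))` and `m = d((i',λ),(j',μ))`;
(2) if `(i,λ')` reaches `(j',μ)` and `(i',λ)` reaches `(j,μ')`, the analogous bounds with
the parities interchanged. -/
theorem stmt_7 (P : Λ → I → Option G) (i i' j j' : I) (l l' m m' : Λ)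
    (h1 : P m j' = none) (h2 : P m' j = none) :
    ((simpGraph P).Reachable (i, l') (j, m') → (simpGraph P).Reachable (i', l) (j', m) →
      (simpGraph P).Reachable (i, l) (j, m) ∧
      (Even (max ((simpGraph P).dist (i, l') (j, m')) ((simpGraph P).dist (i', l) (j', m))) →
        (simpGraph P).dist (i, l) (j, m) ≤
          max ((simpGraph P).dist (i, l') (j, m')) ((simpGraph P).dist (i', l) (j', m))) ∧
      (¬ Even (max ((simpGraph P).dist (i, l') (j, m')) ((simpGraph P).dist (i', l) (j', m))) →
        (simpGraph P).dist (i, l) (j, m) ≤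
          1 + max ((simpGraph P).dist (i, l') (j, m')) ((simpGraph P).dist (i', l) (j', m)))) ∧
    ((simpGraph P).Reachable (i, l') (j', m) → (simpGraph P).Reachable (i', l) (j, m') →
      (simpGraph P).Reachable (i, l) (j, m) ∧
      (Even (max ((simpGraph P).dist (i, l') (j', m)) ((simpGraph P).dist (i', l) (j, m'))) →
        (simpGraph P).dist (i, l) (j, m) ≤
          1 + max ((simpGraph P).dist (i, l') (j', m)) ((simpGraph P).dist (i', l) (j, m'))) ∧
      (¬ Even (max ((simpGraph P).dist (i, l') (j', m)) ((simpGraph P).dist (i', l) (j, m'))) →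
        (simpGraph P).dist (i, l) (j, m) ≤
          max ((simpGraph P).dist (i, l') (j', m)) ((simpGraph P).dist (i', l) (j, m')))) := by
  constructor
  · intro hr1 hr2
    obtain ⟨p1, hp1⟩ := hr1.exists_walk_length_eq_dist
    obtain ⟨p2, hp2⟩ := hr2.exists_walk_length_eq_dist
    set d1 := (simpGraph P).dist (i, l') (j, m') with hd1
    set d2 := (simpGraph P).dist (i', l) (j', m) with hd2
    have hqX : ∃ q : (bipGraph P).Walk (.inl i)
        (if Even d1 then (.inl j : I ⊕ Λ) else .inr m'), q.length = d1 := by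
      rw [← hp1]; exact (extract P p1).1
    have hqY : ∃ q : (bipGraph P).Walk (.inr l)
        (if Even d2 then (.inr m : I ⊕ Λ) else .inl j'), q.length = d2 := by
      rw [← hp2]; exact (extract P p2).2
    have key : ∀ N, Even N → d1 ≤ N → d2 ≤ N →
        (simpGraph P).Reachable (i, l) (j, m) ∧ (simpGraph P).dist (i, l) (j, m) ≤ N := by
      intro N hN hle1 hle2
      obtain ⟨qX, hqX'⟩ :=
        reachTarget P (show (bipGraph P).Adj (.inl j) (.inr m') from h2) hqX hle1
      obtain ⟨qY, hqY'⟩ :=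
        reachTarget P (show (bipGraph P).Adj (.inr m) (.inl j') from h1) hqY hle2
      obtain ⟨w, hw⟩ := combine P N i l (j, m) (qX.copy rfl (by simp [endA, hN]))
        (qY.copy rfl (by simp [endB, hN])) (by simpa using hqX') (by simpa using hqY')
      exact ⟨w.reachable, le_trans (SimpleGraph.dist_le w) hw⟩
    rcases Nat.even_or_odd (max d1 d2) with hM | hM
    · obtain ⟨hre, hb⟩ := key (max d1 d2) hM (le_max_left _ _) (le_max_right _ _)
      exact ⟨hre, fun _ => hb, fun h => absurd hM h⟩
    · obtain ⟨hre, hb⟩ := key (max d1 d2 + 1)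
        (Nat.even_add_one.mpr (Nat.not_even_iff_odd.mpr hM))
        (le_trans (le_max_left _ _) (Nat.le_succ _))
        (le_trans (le_max_right _ _) (Nat.le_succ _))
      exact ⟨hre, fun h => absurd h (Nat.not_even_iff_odd.mpr hM), fun _ => by omega⟩
  · intro hr1 hr2
    obtain ⟨p1, hp1⟩ := hr1.exists_walk_length_eq_dist
    obtain ⟨p2, hp2⟩ := hr2.exists_walk_length_eq_dist
    set d1 := (simpGraph P).dist (i, l') (j', m) with hd1
    set d2 := (simpGraph P).dist (i', l) (j, m') with hd2
    have hqX : ∃ q : (bipGraph P).Walk (.inl i)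
        (if Even d1 then (.inl j' : I ⊕ Λ) else .inr m), q.length = d1 := by
      rw [← hp1]; exact (extract P p1).1
    have hqY : ∃ q : (bipGraph P).Walk (.inr l)
        (if Even d2 then (.inr m' : I ⊕ Λ) else .inl j), q.length = d2 := by
      rw [← hp2]; exact (extract P p2).2
    have key : ∀ N, ¬ Even N → d1 ≤ N → d2 ≤ N →
        (simpGraph P).Reachable (i, l) (j, m) ∧ (simpGraph P).dist (i, l) (j, m) ≤ N := by
      intro N hN hle1 hle2
      obtain ⟨qX, hqX'⟩ :=
        reachTarget P (show (bipGraph P).Adj (.inl j') (.inr m) from h1) hqX hle1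
      obtain ⟨qY, hqY'⟩ :=
        reachTarget P (show (bipGraph P).Adj (.inr m') (.inl j) from h2) hqY hle2
      obtain ⟨w, hw⟩ := combine P N i l (j, m) (qX.copy rfl (by simp [endA, hN]))
        (qY.copy rfl (by simp [endB, hN])) (by simpa using hqX') (by simpa using hqY')
      exact ⟨w.reachable, le_trans (SimpleGraph.dist_le w) hw⟩
    rcases Nat.even_or_odd (max d1 d2) with hM | hM
    · obtain ⟨hre, hb⟩ := key (max d1 d2 + 1)
        (by simp [Nat.even_add_one, hM])
        (le_trans (le_max_left _ _) (Nat.le_succ _))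
        (le_trans (le_max_right _ _) (Nat.le_succ _))
      exact ⟨hre, fun _ => by omega, fun h => absurd hM h⟩
    · obtain ⟨hre, hb⟩ := key (max d1 d2) (Nat.not_even_iff_odd.mpr hM)
        (le_max_left _ _) (le_max_right _ _)
      exact ⟨hre, fun h => absurd h (Nat.not_even_iff_odd.mpr hM), fun _ => hb⟩
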